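/- Let n ≥ 1 and let (a_k)_{k≥0} be real numbers with a_k ≥ 0 for all k ≥ 1 and ∑_{k≥1} a_k < ∞, and define F : [−1,1] → ℝ by F(t) = a₀ − ∑_{k=1}^{∞} a_k tᵏ. For a Borel probability measure μ on the unit sphere S^{n−1} ⊂ ℝⁿ, set I_F(μ) = ∫∫ F(⟨x,y⟩) dμ(x)dμ(y). Then I_F(μ) ≤ I_F(σ) for every Borel probability measure μ on S^{n−1}, where σ is the uniform probability measure on S^{n−1}. Moreover, if a_k > 0 for every k ≥ 1, then σ is the unique maximizer: I_F(μ) = I_F(σ) implies μ = σ. -/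

import Mathlib

open MeasureTheory
open scoped RealInnerProductSpace
open scoped ENNReal NNReal BoundedContinuousFunction

namespace UMax

noncomputable def phi (n k : ℕ) (x : EuclideanSpace ℝ (Fin n)) :
    EuclideanSpace ℝ (Fin k → Fin n) :=
  WithLp.toLp 2 (fun (f : Fin k → Fin n) => ∏ i, x (f i))

lemma inner_phi (n k : ℕ) (x y : EuclideanSpace ℝ (Fin n)) :
    ⟪phi n k x, phi n k y⟫ = ⟪x, y⟫ ^ k := by
  simp only [phi, PiLp.inner_apply, RCLike.inner_apply, starRingEnd_apply, star_trivial]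
  have : ((∑ j : Fin n, y j * x j) ^ k) = ∏ _i : Fin k, ∑ j : Fin n, y j * x j := by
    rw [Finset.prod_const, Finset.card_univ, Fintype.card_fin]
  rw [this, Finset.prod_univ_sum]
  rw [Fintype.piFinset_univ]
  exact Finset.sum_congr rfl fun f _ => (Finset.prod_mul_distrib).symm

lemma continuous_phi (n k : ℕ) : Continuous (phi n k) := by
  have : Continuous fun (x : EuclideanSpace ℝ (Fin n)) (f : Fin k → Fin n) =>
      ∏ i, x (f i) := by
    apply continuous_pi
    intro f
    exact continuous_finset_prod _ fun i _ => (EuclideanSpace.proj (f i)).continuous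
  exact (PiLp.continuous_toLp 2 _).comp this

lemma norm_phi (n k : ℕ) (x : EuclideanSpace ℝ (Fin n)) (hx : ‖x‖ = 1) :
    ‖phi n k x‖ = 1 := by
  have h : ‖phi n k x‖ ^ 2 = 1 := by
    rw [← real_inner_self_eq_norm_sq, inner_phi, real_inner_self_eq_norm_sq, hx]
    simp
  rcases sq_eq_one_iff.mp h with h1 | h1
  · exact h1
  · nlinarith [norm_nonneg (phi n k x)]


variable {n : ℕ}

local notation "S" => Metric.sphere (0 : EuclideanSpace ℝ (Fin n)) 1

lemma ae_unit {μ : Measure (EuclideanSpace ℝ (Fin n))} [IsProbabilityMeasure μ]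
    (hμ : μ S = 1) : ∀ᵐ x ∂μ, ‖x‖ = 1 := by
  have hc : μ (Sᶜ) = 0 := by
    rw [measure_compl ((Metric.isClosed_sphere.measurableSet)) (measure_ne_top _ _), hμ, measure_univ]
    simp
  filter_upwards [measure_eq_zero_iff_ae_notMem.mp hc] with x hx
  simpa [mem_sphere_iff_norm, Classical.not_not] using hx

lemma integrable_phi (k : ℕ) {μ : Measure (EuclideanSpace ℝ (Fin n))}
    [IsProbabilityMeasure μ] (hμ : μ S = 1) : Integrable (phi n k) μ := by
  refine Integrable.mono' (integrable_const 1) ((continuous_phi n k).aestronglyMeasurable) ?_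
  filter_upwards [ae_unit hμ] with x hx
  rw [norm_phi n k x hx]

/-- the mean feature vector -/
noncomputable def mv (μ : Measure (EuclideanSpace ℝ (Fin n))) (k : ℕ) :
    EuclideanSpace ℝ (Fin k → Fin n) := ∫ x, phi n k x ∂μ

lemma norm_mv_le (k : ℕ) {μ : Measure (EuclideanSpace ℝ (Fin n))}
    [IsProbabilityMeasure μ] (hμ : μ S = 1) : ‖mv μ k‖ ≤ 1 := by
  have := norm_integral_le_of_norm_le_const (μ := μ) (f := phi n k) (C := 1) ?_
  · simpa [mv] using this
  · filter_upwards [ae_unit hμ] with x hx; rw [norm_phi n k x hx]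

lemma inner_int (k : ℕ) {μ : Measure (EuclideanSpace ℝ (Fin n))}
    [IsProbabilityMeasure μ] (hμ : μ S = 1) (x : EuclideanSpace ℝ (Fin n)) :
    ∫ y, ⟪x, y⟫ ^ k ∂μ = ⟪phi n k x, mv μ k⟫ := by
  rw [mv, ← integral_inner (integrable_phi k hμ)]
  exact integral_congr_ae (Filter.Eventually.of_forall fun y => (inner_phi n k x y).symm)

lemma double_inner (k : ℕ) {μ ν : Measure (EuclideanSpace ℝ (Fin n))}
    [IsProbabilityMeasure μ] [IsProbabilityMeasure ν]
    (hμ : μ S = 1) (hν : ν S = 1) :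
    ∫ x, ∫ y, ⟪x, y⟫ ^ k ∂ν ∂μ = ⟪mv μ k, mv ν k⟫ := by
  have h1 : ∀ x, ∫ y, ⟪x, y⟫ ^ k ∂ν = ⟪phi n k x, mv ν k⟫ := fun x => inner_int k hν x
  simp_rw [h1]
  have : ∀ x : EuclideanSpace ℝ (Fin n), ⟪phi n k x, mv ν k⟫ = ⟪mv ν k, phi n k x⟫ :=
    fun x => real_inner_comm _ _
  simp_rw [this]
  rw [integral_inner (integrable_phi k hμ), real_inner_comm]
  rfl


section Rot
variable (hn : 1 ≤ n) {σ : Measure (EuclideanSpace ℝ (Fin n))} [IsProbabilityMeasure σ]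
  (hσs : σ (Metric.sphere (0 : EuclideanSpace ℝ (Fin n)) 1) = 1)
  (hσrot : ∀ Q : EuclideanSpace ℝ (Fin n) ≃ₗᵢ[ℝ] EuclideanSpace ℝ (Fin n),
    Measure.map Q σ = σ)

noncomputable def unitv (hn : 1 ≤ n) : EuclideanSpace ℝ (Fin n) :=
  EuclideanSpace.single (⟨0, hn⟩ : Fin n) (1 : ℝ)

lemma norm_unitv : ‖unitv (n := n) hn‖ = 1 := by
  simp [unitv, EuclideanSpace.norm_single]

include hσrot in
lemma const_on_sphere (k : ℕ) (x : EuclideanSpace ℝ (Fin n)) (hx : ‖x‖ = 1) :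
    ∫ y, ⟪x, y⟫ ^ k ∂σ = ∫ y, ⟪unitv hn, y⟫ ^ k ∂σ := by
  set e := unitv (n := n) hn with he
  have hQ : (Submodule.reflection (ℝ ∙ (e - x))ᗮ) e = x :=
    Submodule.reflection_sub (by rw [norm_unitv, hx])
  set Q := Submodule.reflection (ℝ ∙ (e - x))ᗮ with hQdef
  have hcont : Continuous fun y : EuclideanSpace ℝ (Fin n) => ⟪(Q e : EuclideanSpace ℝ (Fin n)), y⟫ ^ k :=
    (continuous_const.inner continuous_id).pow k
  calc ∫ y, ⟪x, y⟫ ^ k ∂σ = ∫ y, ⟪Q e, y⟫ ^ k ∂σ := by rw [hQ]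
    _ = ∫ y, ⟪Q e, y⟫ ^ k ∂(Measure.map Q σ) := by rw [hσrot Q]
    _ = ∫ y, ⟪Q e, Q y⟫ ^ k ∂σ := by
        rw [integral_map Q.continuous.measurable.aemeasurable hcont.aestronglyMeasurable]
    _ = ∫ y, ⟪e, y⟫ ^ k ∂σ := by simp_rw [Q.inner_map_map]

include hn hσs hσrot in
lemma key_decomp (k : ℕ) {μ : Measure (EuclideanSpace ℝ (Fin n))}
    [IsProbabilityMeasure μ] (hμ : μ S = 1) :
    ⟪mv μ k, mv μ k⟫ = ⟪mv σ k, mv σ k⟫ + ‖mv μ k - mv σ k‖ ^ 2 := by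
  have hconst : ∀ (ν : Measure (EuclideanSpace ℝ (Fin n))) [IsProbabilityMeasure ν],
      ν S = 1 → ∫ x, ∫ y, ⟪x, y⟫ ^ k ∂σ ∂ν = ∫ y, ⟪unitv hn, y⟫ ^ k ∂σ := by
    intro ν _ hν
    have hcongr : ∀ᵐ x ∂ν, (∫ y, ⟪x, y⟫ ^ k ∂σ) = ∫ y, ⟪unitv hn, y⟫ ^ k ∂σ := by
      filter_upwards [ae_unit hν] with x hx
      exact const_on_sphere hn hσrot k x hx
    rw [integral_congr_ae hcongr, integral_const]
    simp
  have h1 : ∫ x, ∫ y, ⟪x, y⟫ ^ k ∂σ ∂μ = ∫ y, ⟪unitv hn, y⟫ ^ k ∂σ := hconst μ hμ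
  have h2 : ∫ x, ∫ y, ⟪x, y⟫ ^ k ∂σ ∂σ = ∫ y, ⟪unitv hn, y⟫ ^ k ∂σ := hconst σ hσs
  rw [double_inner k hμ hσs] at h1
  rw [double_inner k hσs hσs] at h2
  have hms : ⟪mv μ k, mv σ k⟫ = ⟪mv σ k, mv σ k⟫ := h1.trans h2.symm
  have hexp := norm_sub_sq_real (mv μ k) (mv σ k)
  rw [real_inner_self_eq_norm_sq] at hms
  rw [real_inner_self_eq_norm_sq (mv μ k), real_inner_self_eq_norm_sq (mv σ k)]
  linarith

end Rot

section Series
variable (a : ℕ → ℝ) (ha : ∀ k : ℕ, 1 ≤ k → 0 ≤ a k)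
  (hsum : Summable (fun k : ℕ => a (k + 1)))

noncomputable def clamp (t : ℝ) : ℝ := max (-1) (min 1 t)

lemma clamp_abs_le (t : ℝ) : |clamp t| ≤ 1 := by
  rw [abs_le]; constructor
  · exact le_max_left _ _
  · exact max_le (by norm_num) (min_le_left _ _)

lemma clamp_eq {t : ℝ} (h : t ∈ Set.Icc (-1 : ℝ) 1) : clamp t = t := by
  rcases h with ⟨h1, h2⟩
  rw [clamp, min_eq_right h2, max_eq_right h1]

lemma continuous_clamp : Continuous clamp :=
  continuous_const.max (continuous_const.min continuous_id)

noncomputable def Ser (t : ℝ) : ℝ := ∑' k : ℕ, a (k + 1) * clamp t ^ (k + 1)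

include ha in
lemma Ser_term_bound (k : ℕ) (t : ℝ) : ‖a (k + 1) * clamp t ^ (k + 1)‖ ≤ a (k + 1) := by
  rw [norm_mul, norm_pow]
  have h1 : ‖clamp t‖ ≤ 1 := clamp_abs_le t
  have h2 : ‖clamp t‖ ^ (k + 1) ≤ 1 := pow_le_one₀ (norm_nonneg _) h1
  have h0 : (0:ℝ) ≤ a (k+1) := ha (k+1) (by omega)
  calc ‖a (k+1)‖ * ‖clamp t‖ ^ (k+1) ≤ ‖a (k+1)‖ * 1 := by
        exact mul_le_mul_of_nonneg_left h2 (norm_nonneg _)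
    _ = a (k+1) := by rw [mul_one, Real.norm_eq_abs, abs_of_nonneg h0]

include ha hsum in
lemma continuous_Ser : Continuous (Ser a) := by
  apply continuous_tsum (u := fun k => a (k + 1))
  · exact fun k => (continuous_const.mul ((continuous_clamp).pow (k+1)))
  · exact hsum
  · exact fun k t => Ser_term_bound a ha k t

include ha hsum in
lemma Ser_bound (t : ℝ) : ‖Ser a t‖ ≤ ∑' k : ℕ, a (k + 1) := by
  refine (norm_tsum_le_tsum_norm ?_).trans (Summable.tsum_le_tsum (fun k => Ser_term_bound a ha k t) ?_ hsum)
  · apply hsum.of_nonneg_of_le (fun k => norm_nonneg _) (fun k => Ser_term_bound a ha k t)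
  · apply hsum.of_nonneg_of_le (fun k => norm_nonneg _) (fun k => Ser_term_bound a ha k t)

include ha in
lemma Ser_eq {t : ℝ} (h : t ∈ Set.Icc (-1 : ℝ) 1) :
    Ser a t = ∑' k : ℕ, a (k + 1) * t ^ (k + 1) := by
  rw [Ser, clamp_eq h]

end Series

lemma integrable_of_bound {α : Type*} [MeasurableSpace α] (μ : Measure α) [IsFiniteMeasure μ]
    {f : α → ℝ} (hf : AEStronglyMeasurable f μ) (C : ℝ) (hC : ∀ x, ‖f x‖ ≤ C) :
    Integrable f μ :=
  (integrable_const C).mono' hf (Filter.Eventually.of_forall hC)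

lemma inner_mem_Icc {x y : EuclideanSpace ℝ (Fin n)} (hx : ‖x‖ = 1) (hy : ‖y‖ = 1) :
    ⟪x, y⟫ ∈ Set.Icc (-1 : ℝ) 1 := by
  have := abs_real_inner_le_norm x y
  rw [hx, hy] at this
  exact abs_le.mp (by linarith)

section Energy
variable (a : ℕ → ℝ) (ha : ∀ k : ℕ, 1 ≤ k → 0 ≤ a k)
  (hsum : Summable (fun k : ℕ => a (k + 1)))

include ha hsum in
lemma tsum_double (μ : Measure (EuclideanSpace ℝ (Fin n))) [IsProbabilityMeasure μ]
    (hμ : μ S = 1) :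
    ∫ x, ∫ y, Ser a ⟪x, y⟫ ∂μ ∂μ
      = ∑' k : ℕ, a (k + 1) * ⟪mv μ (k + 1), mv μ (k + 1)⟫ := by
  have hA : Continuous fun z : (EuclideanSpace ℝ (Fin n)) × (EuclideanSpace ℝ (Fin n)) =>
      Ser a ⟪z.1, z.2⟫ := (continuous_Ser a ha hsum).comp (continuous_fst.inner continuous_snd)
  have hint : Integrable (fun z : (EuclideanSpace ℝ (Fin n)) × (EuclideanSpace ℝ (Fin n)) =>
      Ser a ⟪z.1, z.2⟫) (μ.prod μ) :=
    integrable_of_bound _ hA.aestronglyMeasurable _ (fun z => Ser_bound a ha hsum _)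
  rw [← integral_prod _ hint]
  have hrfl : (fun z : (EuclideanSpace ℝ (Fin n)) × (EuclideanSpace ℝ (Fin n)) =>
      Ser a ⟪z.1, z.2⟫)
      = fun z => ∑' k : ℕ, a (k + 1) * clamp ⟪z.1, z.2⟫ ^ (k + 1) := rfl
  have hmeas : ∀ k : ℕ, AEStronglyMeasurable
      (fun z : (EuclideanSpace ℝ (Fin n)) × (EuclideanSpace ℝ (Fin n)) =>
        a (k + 1) * clamp ⟪z.1, z.2⟫ ^ (k + 1)) (μ.prod μ) :=
    fun k => (continuous_const.mul
      ((continuous_clamp.comp (continuous_fst.inner continuous_snd)).pow (k+1))).aestronglyMeasurable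
  have hb : ∀ k : ℕ, (∫⁻ z, ‖a (k + 1) * clamp ⟪z.1, z.2⟫ ^ (k + 1)‖₊ ∂(μ.prod μ))
      ≤ ENNReal.ofReal (a (k + 1)) := by
    intro k
    calc ∫⁻ z, ‖a (k + 1) * clamp ⟪z.1, z.2⟫ ^ (k + 1)‖₊ ∂(μ.prod μ)
        ≤ ∫⁻ _, ENNReal.ofReal (a (k + 1)) ∂(μ.prod μ) := by
          refine lintegral_mono fun z => ?_
          rw [← enorm_eq_nnnorm, ← ofReal_norm_eq_enorm]
          exact ENNReal.ofReal_le_ofReal (Ser_term_bound a ha k _)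
      _ = ENNReal.ofReal (a (k + 1)) := by simp
  have hfin : (∑' k : ℕ, ∫⁻ z, ‖a (k + 1) * clamp ⟪z.1, z.2⟫ ^ (k + 1)‖₊ ∂(μ.prod μ)) ≠ ⊤ := by
    refine ne_top_of_le_ne_top ?_ (ENNReal.tsum_le_tsum hb)
    rw [← ENNReal.ofReal_tsum_of_nonneg (fun k => ha (k+1) (by omega)) hsum]
    exact ENNReal.ofReal_ne_top
  rw [hrfl, integral_tsum hmeas hfin]
  congr 1
  funext k
  have hintk : Integrable (fun z : (EuclideanSpace ℝ (Fin n)) × (EuclideanSpace ℝ (Fin n)) =>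
      a (k + 1) * clamp ⟪z.1, z.2⟫ ^ (k + 1)) (μ.prod μ) :=
    integrable_of_bound _ (hmeas k) _ (fun z => Ser_term_bound a ha k _)
  rw [integral_prod _ hintk]
  have hx : ∀ᵐ x ∂μ, ∫ y, a (k + 1) * clamp ⟪x, y⟫ ^ (k + 1) ∂μ
      = a (k + 1) * ⟪phi n (k + 1) x, mv μ (k + 1)⟫ := by
    filter_upwards [ae_unit hμ] with x hx
    have h1 : ∫ y, a (k + 1) * clamp ⟪x, y⟫ ^ (k + 1) ∂μ
        = ∫ y, a (k + 1) * ⟪x, y⟫ ^ (k + 1) ∂μ := by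
      refine integral_congr_ae ?_
      filter_upwards [ae_unit hμ] with y hy
      rw [clamp_eq (inner_mem_Icc hx hy)]
    rw [h1, integral_const_mul, inner_int (k + 1) hμ x]
  rw [integral_congr_ae hx, integral_const_mul]
  congr 1
  have hcomm : ∀ x : EuclideanSpace ℝ (Fin n),
      ⟪phi n (k+1) x, mv μ (k+1)⟫ = ⟪mv μ (k+1), phi n (k+1) x⟫ := fun x => real_inner_comm _ _
  simp_rw [hcomm]
  rw [integral_inner (integrable_phi (k+1) hμ), real_inner_comm]
  rfl

include ha hsum in
lemma energy_expand (F : ℝ → ℝ)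
    (hF : ∀ t ∈ Set.Icc (-1 : ℝ) 1, F t = a 0 - ∑' k : ℕ, a (k + 1) * t ^ (k + 1))
    (μ : Measure (EuclideanSpace ℝ (Fin n))) [IsProbabilityMeasure μ] (hμ : μ S = 1) :
    ∫ x, ∫ y, F ⟪x, y⟫ ∂μ ∂μ
      = a 0 - ∑' k : ℕ, a (k + 1) * ⟪mv μ (k + 1), mv μ (k + 1)⟫ := by
  have hSerc : ∀ x : EuclideanSpace ℝ (Fin n),
      Continuous fun y : EuclideanSpace ℝ (Fin n) => Ser a ⟪x, y⟫ :=
    fun x => (continuous_Ser a ha hsum).comp (continuous_const.inner continuous_id)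
  have hSeri : ∀ x, Integrable (fun y => Ser a ⟪x, y⟫) μ := fun x =>
    integrable_of_bound _ (hSerc x).aestronglyMeasurable _ (fun y => Ser_bound a ha hsum _)
  -- replace F by the clamped version
  have step1 : ∫ x, ∫ y, F ⟪x, y⟫ ∂μ ∂μ = ∫ x, ∫ y, (a 0 - Ser a ⟪x, y⟫) ∂μ ∂μ := by
    refine integral_congr_ae ?_
    filter_upwards [ae_unit hμ] with x hx
    refine integral_congr_ae ?_
    filter_upwards [ae_unit hμ] with y hy
    have hm := inner_mem_Icc hx hy
    rw [hF _ hm, Ser_eq a ha hm]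
  rw [step1]
  have step2 : ∀ x : EuclideanSpace ℝ (Fin n),
      ∫ y, (a 0 - Ser a ⟪x, y⟫) ∂μ = a 0 - ∫ y, Ser a ⟪x, y⟫ ∂μ := by
    intro x
    rw [integral_sub (integrable_const _) (hSeri x), integral_const]
    simp
  simp_rw [step2]
  have hOuterCont : Continuous fun x => ∫ y, Ser a ⟪x, y⟫ ∂μ := by
    refine continuous_of_dominated (bound := fun _ => ∑' k : ℕ, a (k+1)) ?_ ?_ ?_ ?_
    · exact fun x => (hSerc x).aestronglyMeasurable
    · exact fun x => Filter.Eventually.of_forall fun y => Ser_bound a ha hsum _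
    · exact integrable_const _
    · exact Filter.Eventually.of_forall fun y =>
        (continuous_Ser a ha hsum).comp (continuous_id.inner continuous_const)
  have hOuterInt : Integrable (fun x => ∫ y, Ser a ⟪x, y⟫ ∂μ) μ := by
    refine integrable_of_bound _ hOuterCont.aestronglyMeasurable (∑' k : ℕ, a (k+1)) fun x => ?_
    exact norm_integral_le_of_norm_le_const (Filter.Eventually.of_forall fun y => Ser_bound a ha hsum _)
      |>.trans (by simp)
  rw [integral_sub (integrable_const _) hOuterInt, integral_const]
  simp only [measure_univ, probReal_univ, smul_eq_mul, one_mul]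
  rw [tsum_double a ha hsum μ hμ]

end Energy

lemma moment_eq (k : ℕ) (f : Fin k → Fin n) {μ : Measure (EuclideanSpace ℝ (Fin n))}
    [IsProbabilityMeasure μ] (hμ : μ S = 1) :
    ∫ x, ∏ i, x (f i) ∂μ = (mv μ k) f := by
  have h := (EuclideanSpace.proj (𝕜 := ℝ) f).integral_comp_comm (integrable_phi k hμ)
  simpa [phi, mv] using h

section Moments

lemma subalg_sep : True := trivial

lemma list_prod_eq (l : List (Fin n)) (v : EuclideanSpace ℝ (Fin n)) :
    (l.map (fun i => v i)).prod = ∏ i : Fin l.length, v (l.get i) := by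
  rw [← List.ofFn_getElem_eq_map, List.prod_ofFn]
  rfl

lemma measure_eq_of_moments {μ ν : Measure (EuclideanSpace ℝ (Fin n))}
    [IsProbabilityMeasure μ] [IsProbabilityMeasure ν]
    (hμ : μ S = 1) (hν : ν S = 1)
    (hmom : ∀ (k : ℕ) (f : Fin k → Fin n),
      ∫ x, ∏ i, x (f i) ∂μ = ∫ x, ∏ i, x (f i) ∂ν) : μ = ν := by
  have hS : MeasurableSet (S) := Metric.isClosed_sphere.measurableSet
  haveI : CompactSpace (S : Set (EuclideanSpace ℝ (Fin n))) :=
    isCompact_iff_compactSpace.mp (isCompact_sphere 0 1)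
  set X := (Metric.sphere (0 : EuclideanSpace ℝ (Fin n)) 1 : Set (EuclideanSpace ℝ (Fin n)))
  set μ' : Measure X := μ.comap Subtype.val with hμ'def
  set ν' : Measure X := ν.comap Subtype.val with hν'def
  have hmapμ : μ'.map Subtype.val = μ := by
    rw [hμ'def, map_comap_subtype_coe hS]
    refine Measure.restrict_eq_self_of_ae_mem ?_
    filter_upwards [ae_unit hμ] with x hx
    simpa [X, mem_sphere_iff_norm] using hx
  have hmapν : ν'.map Subtype.val = ν := by
    rw [hν'def, map_comap_subtype_coe hS]
    refine Measure.restrict_eq_self_of_ae_mem ?_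
    filter_upwards [ae_unit hν] with x hx
    simpa [X, mem_sphere_iff_norm] using hx
  have hembed : MeasurableEmbedding (Subtype.val : X → EuclideanSpace ℝ (Fin n)) :=
    MeasurableEmbedding.subtype_coe hS
  haveI : IsProbabilityMeasure μ' := by
    constructor
    rw [hμ'def, hembed.comap_apply, Set.image_univ, Subtype.range_coe, hμ]
  haveI : IsProbabilityMeasure ν' := by
    constructor
    rw [hν'def, hembed.comap_apply, Set.image_univ, Subtype.range_coe, hν]
  -- coordinate functions
  set coordF : Fin n → C(X, ℝ) := fun i =>
    ⟨fun x => (x : EuclideanSpace ℝ (Fin n)) i,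
      (EuclideanSpace.proj (𝕜 := ℝ) i).continuous.comp continuous_subtype_val⟩ with hcoordF
  set A : Subalgebra ℝ C(X, ℝ) := Algebra.adjoin ℝ (Set.range coordF) with hA
  have hsep : A.SeparatesPoints := by
    intro x y hxy
    have : (x : EuclideanSpace ℝ (Fin n)) ≠ y := fun h => hxy (Subtype.ext h)
    obtain ⟨i, hi⟩ := Function.ne_iff.mp (fun h : (fun j => (x : EuclideanSpace ℝ (Fin n)) j) = (fun j => (y : EuclideanSpace ℝ (Fin n)) j) => this (PiLp.ext (congrFun h)))
    exact ⟨coordF i, ⟨coordF i, Algebra.subset_adjoin ⟨i, rfl⟩, rfl⟩, hi⟩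
  -- integrability of continuous maps
  have hint : ∀ (ρ : Measure X) [IsProbabilityMeasure ρ] (g : C(X, ℝ)),
      Integrable (fun x => g x) ρ := by
    intro ρ _ g
    exact integrable_of_bound _ g.continuous.aestronglyMeasurable ‖g‖
      fun x => g.norm_coe_le_norm x
  -- continuity of integration
  have hlip : ∀ (ρ : Measure X) [IsProbabilityMeasure ρ],
      Continuous fun g : C(X, ℝ) => ∫ x, g x ∂ρ := by
    intro ρ _
    refine (LipschitzWith.of_dist_le_mul (K := 1) fun g h => ?_).continuous
    rw [Real.dist_eq, ← integral_sub (hint ρ g) (hint ρ h)]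
    have hb : ∀ x : X, ‖g x - h x‖ ≤ ‖g - h‖ := by
      intro x
      calc ‖g x - h x‖ = ‖(g - h) x‖ := by simp
        _ ≤ ‖g - h‖ := (g - h).norm_coe_le_norm x
    calc |∫ x, (g x - h x) ∂ρ| ≤ ‖g - h‖ * (ρ Set.univ).toReal :=
          norm_integral_le_of_norm_le_const (Filter.Eventually.of_forall hb)
      _ = 1 * dist g h := by simp [dist_eq_norm]
  have hclosed : IsClosed {g : C(X, ℝ) | ∫ x, g x ∂μ' = ∫ x, g x ∂ν'} :=
    isClosed_eq (hlip μ') (hlip ν')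
  -- monomials
  have hlist : ∀ l : List (Fin n),
      (∫ x : X, (l.map (fun i => (x : EuclideanSpace ℝ (Fin n)) i)).prod ∂μ')
        = ∫ x : X, (l.map (fun i => (x : EuclideanSpace ℝ (Fin n)) i)).prod ∂ν' := by
    intro l
    have hcont : Continuous fun v : EuclideanSpace ℝ (Fin n) =>
        ∏ i : Fin l.length, v (l.get i) :=
      continuous_finset_prod _ fun i _ => (EuclideanSpace.proj (𝕜 := ℝ) (l.get i)).continuous
    have keyμ : (∫ x : X, ∏ i : Fin l.length, (x : EuclideanSpace ℝ (Fin n)) (l.get i) ∂μ')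
        = ∫ v, ∏ i : Fin l.length, v (l.get i) ∂μ := by
      conv_rhs => rw [← hmapμ]
      rw [integral_map measurable_subtype_coe.aemeasurable hcont.aestronglyMeasurable]
    have keyν : (∫ x : X, ∏ i : Fin l.length, (x : EuclideanSpace ℝ (Fin n)) (l.get i) ∂ν')
        = ∫ v, ∏ i : Fin l.length, v (l.get i) ∂ν := by
      conv_rhs => rw [← hmapν]
      rw [integral_map measurable_subtype_coe.aemeasurable hcont.aestronglyMeasurable]
    simp_rw [list_prod_eq]
    rw [keyμ, keyν]
    exact hmom l.length l.get
  -- all elements of A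
  have hAP : (A : Set C(X, ℝ)) ⊆ {g : C(X, ℝ) | ∫ x, g x ∂μ' = ∫ x, g x ∂ν'} := by
    intro g hg
    have hg' : g ∈ Submodule.span ℝ ((Submonoid.closure (Set.range coordF) : Submonoid C(X, ℝ)) : Set C(X, ℝ)) := by
      rw [← Algebra.adjoin_eq_span]
      exact hg
    clear hg
    induction hg' using Submodule.span_induction with
    | mem z hz =>
        have hrep : ∃ l : List (Fin n),
            ∀ x : X, z x = (l.map (fun i => (x : EuclideanSpace ℝ (Fin n)) i)).prod := by
          induction hz using Submonoid.closure_induction with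
          | mem w hw =>
              obtain ⟨i, rfl⟩ := hw
              exact ⟨[i], fun x => by simp [hcoordF]; rfl⟩
          | one => exact ⟨[], fun x => by simp⟩
          | mul w₁ w₂ h₁ h₂ ih₁ ih₂ =>
              obtain ⟨l₁, hl₁⟩ := ih₁
              obtain ⟨l₂, hl₂⟩ := ih₂
              exact ⟨l₁ ++ l₂, fun x => by
                simp [ContinuousMap.mul_apply, hl₁ x, hl₂ x, List.map_append, List.prod_append]⟩
        obtain ⟨l, hl⟩ := hrep
        show (∫ x, z x ∂μ') = ∫ x, z x ∂ν'
        rw [integral_congr_ae (Filter.Eventually.of_forall fun x => hl x),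
          integral_congr_ae (Filter.Eventually.of_forall fun x => hl x)]
        exact hlist l
    | zero => simp
    | add p q hp hq ihp ihq =>
        show (∫ x, (p + q) x ∂μ') = ∫ x, (p + q) x ∂ν'
        simp only [ContinuousMap.add_apply]
        rw [integral_add (hint μ' p) (hint μ' q), integral_add (hint ν' p) (hint ν' q)]
        rw [ihp, ihq]
    | smul c p hp ihp =>
        show (∫ x, (c • p) x ∂μ') = ∫ x, (c • p) x ∂ν'
        simp only [ContinuousMap.smul_apply]
        rw [integral_smul, integral_smul, ihp]
  -- Stone-Weierstrass
  have htop := ContinuousMap.subalgebra_topologicalClosure_eq_top_of_separatesPoints A hsep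
  have hall : ∀ g : C(X, ℝ), ∫ x, g x ∂μ' = ∫ x, g x ∂ν' := by
    intro g
    have hmem : g ∈ A.topologicalClosure := by rw [htop]; trivial
    have hmem' : g ∈ closure (A : Set C(X, ℝ)) := hmem
    exact closure_minimal hAP hclosed hmem'
  -- conclude
  have hlint : ∀ f : BoundedContinuousFunction X NNReal, ∫⁻ x, f x ∂μ' = ∫⁻ x, f x ∂ν' := by
    intro f
    have hgc : Continuous fun x : X => (f x : ℝ) := NNReal.continuous_coe.comp f.continuous
    have key : ∀ (ρ : Measure X) [IsProbabilityMeasure ρ],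
        ∫⁻ x, (f x : ℝ≥0∞) ∂ρ = ENNReal.ofReal (∫ x, (f x : ℝ) ∂ρ) := by
      intro ρ _
      have hgint : Integrable (fun x : X => (f x : ℝ)) ρ := by
        simpa using hint ρ ⟨_, hgc⟩
      rw [ofReal_integral_eq_lintegral_ofReal hgint
        (Filter.Eventually.of_forall fun x => NNReal.coe_nonneg _)]
      refine lintegral_congr fun x => ?_
      rw [ENNReal.ofReal_coe_nnreal]
    have h2 := hall ⟨_, hgc⟩
    simp only [ContinuousMap.coe_mk] at h2
    rw [key μ', key ν', h2]
  have : μ' = ν' := ext_of_forall_lintegral_eq_of_IsFiniteMeasure hlint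
  rw [← hmapμ, ← hmapν, this]

end Moments

section Main
variable (a : ℕ → ℝ) (ha : ∀ k : ℕ, 1 ≤ k → 0 ≤ a k)
  (hsum : Summable (fun k : ℕ => a (k + 1)))

include ha hsum in
lemma summable_term (μ : Measure (EuclideanSpace ℝ (Fin n))) [IsProbabilityMeasure μ]
    (hμ : μ S = 1) :
    Summable (fun k : ℕ => a (k + 1) * ⟪mv μ (k + 1), mv μ (k + 1)⟫) := by
  refine hsum.of_nonneg_of_le
    (fun k => mul_nonneg (ha _ (by omega)) real_inner_self_nonneg) (fun k => ?_)
  have h1 : ⟪mv μ (k + 1), mv μ (k + 1)⟫ ≤ 1 := by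
    rw [real_inner_self_eq_norm_sq]
    have := norm_mv_le (k + 1) hμ
    nlinarith [norm_nonneg (mv μ (k + 1))]
  calc a (k + 1) * ⟪mv μ (k + 1), mv μ (k + 1)⟫ ≤ a (k + 1) * 1 :=
        mul_le_mul_of_nonneg_left h1 (ha _ (by omega))
    _ = a (k + 1) := mul_one _

end Main
end UMax

open UMax

/-- For `F(t) = a₀ - ∑_{k≥1} a_k tᵏ` with `a_k ≥ 0`, the uniform measure maximizes
the energy `I_F(μ) = ∫∫ F(⟨x,y⟩) dμ dμ` over probability measures on `S^{n-1}`;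
if moreover `a_k > 0` for all `k ≥ 1`, it is the unique maximizer. -/
theorem uniform_maximizes_energy (n : ℕ) (hn : 1 ≤ n)
    (a : ℕ → ℝ) (ha : ∀ k : ℕ, 1 ≤ k → 0 ≤ a k)
    (hsum : Summable (fun k : ℕ => a (k + 1)))
    (F : ℝ → ℝ)
    (hF : ∀ t ∈ Set.Icc (-1 : ℝ) 1, F t = a 0 - ∑' k : ℕ, a (k + 1) * t ^ (k + 1))
    (σ : Measure (EuclideanSpace ℝ (Fin n))) [IsProbabilityMeasure σ]
    (hσs : σ (Metric.sphere (0 : EuclideanSpace ℝ (Fin n)) 1) = 1)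
    (hσrot : ∀ Q : EuclideanSpace ℝ (Fin n) ≃ₗᵢ[ℝ] EuclideanSpace ℝ (Fin n),
      Measure.map Q σ = σ) :
    (∀ μ : Measure (EuclideanSpace ℝ (Fin n)), IsProbabilityMeasure μ →
      μ (Metric.sphere (0 : EuclideanSpace ℝ (Fin n)) 1) = 1 →
      (∫ x, ∫ y, F ⟪x, y⟫ ∂μ ∂μ) ≤ ∫ x, ∫ y, F ⟪x, y⟫ ∂σ ∂σ)
    ∧ ((∀ k : ℕ, 1 ≤ k → 0 < a k) →
      ∀ μ : Measure (EuclideanSpace ℝ (Fin n)), IsProbabilityMeasure μ →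
      μ (Metric.sphere (0 : EuclideanSpace ℝ (Fin n)) 1) = 1 →
      (∫ x, ∫ y, F ⟪x, y⟫ ∂μ ∂μ) = (∫ x, ∫ y, F ⟪x, y⟫ ∂σ ∂σ) → μ = σ) := by
  have hEσ := energy_expand a ha hsum F hF σ hσs
  have hSσ := summable_term a ha hsum σ hσs
  constructor
  · intro μ hPμ hμ
    haveI := hPμ
    have hEμ := energy_expand a ha hsum F hF μ hμ
    have hSμ := summable_term a ha hsum μ hμ
    have hterm : ∀ k : ℕ, a (k + 1) * ⟪mv σ (k + 1), mv σ (k + 1)⟫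
        ≤ a (k + 1) * ⟪mv μ (k + 1), mv μ (k + 1)⟫ := by
      intro k
      have hk := key_decomp hn hσs hσrot (k + 1) hμ
      have : ⟪mv σ (k + 1), mv σ (k + 1)⟫ ≤ ⟪mv μ (k + 1), mv μ (k + 1)⟫ := by
        rw [hk]; nlinarith [sq_nonneg ‖mv μ (k + 1) - mv σ (k + 1)‖]
      exact mul_le_mul_of_nonneg_left this (ha _ (by omega))
    have := Summable.tsum_le_tsum hterm hSσ hSμ
    rw [hEμ, hEσ]
    linarith
  · intro hpos μ hPμ hμ heq
    haveI := hPμ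
    have hEμ := energy_expand a ha hsum F hF μ hμ
    have hSμ := summable_term a ha hsum μ hμ
    have htsum_eq : (∑' k : ℕ, a (k + 1) * ⟪mv μ (k + 1), mv μ (k + 1)⟫)
        = ∑' k : ℕ, a (k + 1) * ⟪mv σ (k + 1), mv σ (k + 1)⟫ := by
      rw [hEμ, hEσ] at heq
      linarith
    set d : ℕ → ℝ := fun k => a (k + 1) * ⟪mv μ (k + 1), mv μ (k + 1)⟫
      - a (k + 1) * ⟪mv σ (k + 1), mv σ (k + 1)⟫ with hddef
    have hdsum : Summable d := hSμ.sub hSσ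
    have hd0 : ∀ k, d k = a (k + 1) * ‖mv μ (k + 1) - mv σ (k + 1)‖ ^ 2 := by
      intro k
      have hk := key_decomp hn hσs hσrot (k + 1) hμ
      rw [hddef]
      simp only []
      rw [hk]
      ring
    have hdnonneg : ∀ k, 0 ≤ d k := fun k => by
      rw [hd0 k]
      exact mul_nonneg (ha _ (by omega)) (sq_nonneg _)
    have htd : (∑' k, d k) = 0 := by
      rw [hddef, Summable.tsum_sub hSμ hSσ, htsum_eq, sub_self]
    have hdzero : ∀ k, d k = 0 := by
      intro k
      have hle : d k ≤ ∑' j, d j := Summable.le_tsum hdsum k (fun j _ => hdnonneg j)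
      have := hdnonneg k
      rw [htd] at hle
      linarith
    have hmv : ∀ k : ℕ, mv μ (k + 1) = mv σ (k + 1) := by
      intro k
      have h := hdzero k
      rw [hd0 k] at h
      have hak : a (k + 1) ≠ 0 := ne_of_gt (hpos (k + 1) (by omega))
      have hnorm : ‖mv μ (k + 1) - mv σ (k + 1)‖ ^ 2 = 0 := by
        rcases mul_eq_zero.mp h with h' | h'
        · exact absurd h' hak
        · exact h'
      have : ‖mv μ (k + 1) - mv σ (k + 1)‖ = 0 := by
        nlinarith [norm_nonneg (mv μ (k + 1) - mv σ (k + 1))]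
      rw [norm_eq_zero, sub_eq_zero] at this
      exact this
    refine measure_eq_of_moments hμ hσs ?_
    intro k f
    match k with
    | 0 => simp
    | (j + 1) =>
        rw [moment_eq (j + 1) f hμ, moment_eq (j + 1) f hσs, hmv j]
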